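/- arXiv:1610.06472 — 2 statements merged into one kernel-verified Lean document; each statement's English description precedes it below -/
import Mathlib

section
/- Let op_N(a) = ℓ²/12 · I + (ℓ²/(2π²)) ∑_{n=1}^∞ ((-1)ⁿ/n²)(T^{n,0} + T^{-n,0}) acting on ℂᴺ, where (T^{n,0}ψ)_m = ψ_{m+n} (indices mod N) and ℓ > 0. Then the plane wave ψ^{(ν)} with ψ^{(ν)}_m = e^{2πiνm/N} is an eigenvector of op_N(a) with eigenvalue (νℓ/N)². -/
/-- Translation: (T^{n,0}ψ)_m = ψ_{m+n}. -/
def Tshift (N : ℕ) (n : ℤ) (ψ : ZMod N → ℂ) (m : ZMod N) : ℂ := ψ (m + (n : ZMod N))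

/-- Plane wave ψ^{(ν)}_m = e^{2πiνm/N}. -/
noncomputable def planeWave (N : ℕ) [NeZero N] (ν : ℤ) (m : ZMod N) : ℂ :=
  Complex.exp ((2 * Real.pi * Complex.I * (ν : ℂ) * (m.val : ℂ)) / N)

/-- op_N(a) = ℓ²/12 · I + (ℓ²/(2π²)) ∑_{n≥1} ((-1)ⁿ/n²)(T^{n,0} + T^{-n,0}). -/
noncomputable def opA (N : ℕ) (ℓ : ℝ) (ψ : ZMod N → ℂ) (m : ZMod N) : ℂ :=
  ((ℓ^2/12 : ℝ) : ℂ) * ψ m + ((ℓ^2/(2*Real.pi^2) : ℝ) : ℂ) *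
    ∑' n : ℕ, ((-1 : ℂ)^(n+1) / ((n : ℂ)+1)^2) *
      (Tshift N ((n : ℤ)+1) ψ m + Tshift N (-((n : ℤ)+1)) ψ m)

open Complex Real

lemma exp_cong (N : ℕ) [NeZero N] (ν a b : ℤ) (h : (a : ZMod N) = (b : ZMod N)) :
    Complex.exp (2 * Real.pi * Complex.I * (ν : ℂ) * (a : ℂ) / N)
      = Complex.exp (2 * Real.pi * Complex.I * (ν : ℂ) * (b : ℂ) / N) := by
  rw [ZMod.intCast_eq_intCast_iff, Int.ModEq] at h
  obtain ⟨t, ht⟩ : (N : ℤ) ∣ b - a := Int.ModEq.dvd h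
  have hb : (b : ℂ) = a + N * t := by
    have : b = a + N * t := by linarith [ht]
    rw [this]; push_cast; ring
  have hN : (N : ℂ) ≠ 0 := by exact_mod_cast (NeZero.ne N)
  rw [hb]
  have : 2 * (Real.pi : ℂ) * Complex.I * ν * ((a : ℂ) + N * t) / N
      = 2 * (Real.pi : ℂ) * Complex.I * ν * a / N + (ν * t) * (2 * Real.pi * Complex.I) := by
    field_simp
  rw [this, Complex.exp_add]
  have : ((ν * t : ℤ) : ℂ) = (ν : ℂ) * t := by push_cast; ring
  rw [← this, Complex.exp_int_mul_two_pi_mul_I, mul_one]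

lemma Tshift_planeWave (N : ℕ) [NeZero N] (ν j : ℤ) (m : ZMod N) :
    Tshift N j (planeWave N ν) m
      = Complex.exp (2 * Real.pi * Complex.I * (ν : ℂ) * (j : ℂ) / N) * planeWave N ν m := by
  have key : (( ((m + (j : ZMod N)).val : ℤ) : ZMod N)) = (((m.val : ℤ) + j : ℤ) : ZMod N) := by
    push_cast
    simp [ZMod.natCast_val, ZMod.cast_id]
  have h1 := exp_cong N ν ((m + (j : ZMod N)).val : ℤ) ((m.val : ℤ) + j) key
  have h2 : ((( (m + (j : ZMod N)).val : ℤ)) : ℂ) = (((m + (j : ZMod N)).val : ℕ) : ℂ) := by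
    push_cast; ring
  unfold Tshift planeWave
  rw [← h2, h1]
  rw [← Complex.exp_add]
  congr 1
  have hN : (N : ℂ) ≠ 0 := by exact_mod_cast (NeZero.ne N)
  push_cast
  field_simp
  ring

lemma cos_series (N : ℕ) [NeZero N] (ν : ℤ) (hν₁ : -(N : ℤ) ≤ 2*ν) (hν₂ : 2*ν < (N : ℤ)) :
    HasSum (fun n : ℕ => (-1:ℝ)^(n+1)/((n:ℝ)+1)^2
        * Real.cos (2*Real.pi*(ν : ℝ)/N*((n:ℝ)+1)))
      (Real.pi^2*((ν : ℝ)/N)^2 - Real.pi^2/12) := by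
  have hN : (0 : ℝ) < N := by exact_mod_cast Nat.pos_of_ne_zero (NeZero.ne N)
  set x : ℝ := (ν : ℝ)/N + 1/2 with hx
  have hx01 : x ∈ Set.Icc (0:ℝ) 1 := by
    constructor
    · have : (-(N : ℝ)) ≤ 2*ν := by exact_mod_cast hν₁
      rw [hx]; rw [div_add' _ _ _ hN.ne', le_div_iff₀ hN]
      nlinarith
    · have : (2*ν : ℝ) < N := by exact_mod_cast hν₂
      rw [hx]; rw [div_add' _ _ _ hN.ne', div_le_one hN]
      nlinarith
  have H := hasSum_one_div_nat_pow_mul_cos (k := 1) one_ne_zero hx01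
  -- value of the Bernoulli polynomial
  have hval : ((-1 : ℝ))^(1+1) * (2*Real.pi)^(2*1) / 2 / (2*1).factorial *
      (Polynomial.map (algebraMap ℚ ℝ) (Polynomial.bernoulli (2*1))).eval x
      = Real.pi^2*((ν:ℝ)/N)^2 - Real.pi^2/12 := by
    have hB : (Polynomial.map (algebraMap ℚ ℝ) (Polynomial.bernoulli 2)).eval x
        = x^2 - x + 1/6 := by
      simp [Polynomial.bernoulli_def, Finset.sum_range_succ, _root_.bernoulli_zero,
        _root_.bernoulli_one, bernoulli_eq_bernoulli'_of_ne_one, bernoulli'_two]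
      norm_num
      ring
    norm_num [hB]
    rw [hx]
    ring
  rw [hval] at H
  -- drop the n = 0 term
  rw [← hasSum_nat_add_iff' 1] at H
  simp only [Finset.range_one, Finset.sum_singleton] at H
  norm_num at H
  convert H using 2 with n
  case e'_3 => rfl
  have harg : 2*Real.pi*((n:ℝ)+1)*x = 2*Real.pi*(ν:ℝ)/N*((n:ℝ)+1) + ((n+1 : ℕ) : ℝ)*Real.pi := by
    rw [hx]; push_cast; field_simp
  rw [harg, Real.cos_add_nat_mul_pi]
  push_cast
  ring

/-- the plane wave ψ^{(ν)} (with -N/2 ≤ ν < N/2) is an eigenvector of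
op_N(a) with eigenvalue (νℓ/N)². -/
theorem opA_planeWave_eigenvector (N : ℕ) [NeZero N] (ℓ : ℝ) (hℓ : 0 < ℓ) (ν : ℤ)
    (hν₁ : -(N : ℤ) ≤ 2*ν) (hν₂ : 2*ν < (N : ℤ)) (m : ZMod N) :
    opA N ℓ (planeWave N ν) m
      = ((((ν : ℝ) * ℓ / N)^2 : ℝ) : ℂ) * planeWave N ν m := by
  have hN : (0 : ℝ) < N := by exact_mod_cast Nat.pos_of_ne_zero (NeZero.ne N)
  have hπ : Real.pi ≠ 0 := Real.pi_ne_zero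
  set ψ := planeWave N ν m with hψ
  -- rewrite each term of the series
  have hterm : ∀ n : ℕ, ((-1 : ℂ)^(n+1) / ((n : ℂ)+1)^2) *
      (Tshift N ((n : ℤ)+1) (planeWave N ν) m + Tshift N (-((n : ℤ)+1)) (planeWave N ν) m)
      = (((-1:ℝ)^(n+1)/((n:ℝ)+1)^2 * Real.cos (2*Real.pi*(ν : ℝ)/N*((n:ℝ)+1)) : ℝ) : ℂ)
        * (2 * ψ) := by
    intro n
    rw [Tshift_planeWave, Tshift_planeWave]
    set θ : ℝ := 2*Real.pi*(ν : ℝ)/N*((n:ℝ)+1) with hθ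
    have h1 : 2 * (Real.pi : ℂ) * Complex.I * ν * (((n:ℤ)+1 : ℤ) : ℂ) / N = (θ : ℂ) * Complex.I := by
      rw [hθ]; push_cast
      have hNc : (N : ℂ) ≠ 0 := by exact_mod_cast hN.ne'
      field_simp
    have h2 : 2 * (Real.pi : ℂ) * Complex.I * ν * ((-((n:ℤ)+1) : ℤ) : ℂ) / N
        = -(θ : ℂ) * Complex.I := by
      rw [hθ]; push_cast
      have hNc : (N : ℂ) ≠ 0 := by exact_mod_cast hN.ne'
      field_simp
    rw [h1, h2]
    have hcos : Complex.exp ((θ:ℂ) * Complex.I) + Complex.exp (-(θ:ℂ) * Complex.I)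
        = 2 * Complex.cos (θ : ℂ) := by
      rw [Complex.cos]
      ring_nf
    push_cast
    linear_combination ((-1:ℂ)^(n+1)/((n:ℂ)+1)^2 * planeWave N ν m) * hcos
  -- the complex series
  have H : HasSum (fun n : ℕ => (((-1:ℝ)^(n+1)/((n:ℝ)+1)^2
        * Real.cos (2*Real.pi*(ν : ℝ)/N*((n:ℝ)+1)) : ℝ) : ℂ))
      (((Real.pi^2*((ν : ℝ)/N)^2 - Real.pi^2/12 : ℝ) : ℂ)) :=
    Complex.hasSum_ofReal.mpr (cos_series N ν hν₁ hν₂)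
  have Hc : HasSum (fun n : ℕ => ((-1 : ℂ)^(n+1) / ((n : ℂ)+1)^2) *
      (Tshift N ((n : ℤ)+1) (planeWave N ν) m + Tshift N (-((n : ℤ)+1)) (planeWave N ν) m))
      (((Real.pi^2*((ν : ℝ)/N)^2 - Real.pi^2/12 : ℝ) : ℂ) * (2 * ψ)) := by
    refine HasSum.congr_fun (H.mul_right (2 * ψ)) ?_
    intro n
    exact hterm n
  unfold opA
  rw [Hc.tsum_eq, hψ]
  have hcoef : ((ν : ℝ)*ℓ/N)^2 = (ℓ^2/12 : ℝ)
      + (ℓ^2/(2*Real.pi^2)) * ((Real.pi^2*((ν:ℝ)/N)^2 - Real.pi^2/12) * 2) := by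
    field_simp
    ring
  rw [hcoef]
  push_cast
  ring
end

section
/- The derivative with respect to E of S_p(E) = 4E·arsinh(√(ℓ²/(8E) - 1)) - (ℓ/2)√(ℓ² - 8E) is t_p(E) = 4·arsinh(√(ℓ²/(8E) - 1)), for 0 < E < ℓ²/8. -/
/-- dS_p/dE = t_p, i.e. the derivative of
S_p(E) = 4E·arsinh(√(ℓ²/(8E) - 1)) - (ℓ/2)√(ℓ² - 8E) is
t_p(E) = 4·arsinh(√(ℓ²/(8E) - 1)) for 0 < E < ℓ²/8. -/
theorem action_hasDerivAt_period (ℓ E : ℝ) (hℓ : 0 < ℓ) (hE : 0 < E) (hE' : E < ℓ^2/8) :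
    HasDerivAt (fun E' : ℝ =>
        4*E'*Real.arsinh (Real.sqrt (ℓ^2/(8*E') - 1)) - (ℓ/2) * Real.sqrt (ℓ^2 - 8*E'))
      (4*Real.arsinh (Real.sqrt (ℓ^2/(8*E) - 1))) E := by
  have h8E : (0:ℝ) < 8*E := by linarith
  have hs : 0 < ℓ^2 - 8*E := by nlinarith
  have hu : 0 < ℓ^2/(8*E) - 1 := by
    rw [sub_pos, lt_div_iff₀ h8E]; nlinarith
  have h1 : HasDerivAt (fun E' : ℝ => ℓ^2/(8*E') - 1)
      ((0*(8*E) - ℓ^2*8)/(8*E)^2) E := by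
    have hlin : HasDerivAt (fun E' : ℝ => 8*E') 8 E := by
      simpa using (hasDerivAt_id E).const_mul 8
    exact ((hasDerivAt_const E (ℓ^2)).div hlin (ne_of_gt h8E)).sub_const 1
  have h2 := h1.sqrt (ne_of_gt hu)
  have h3 := (Real.hasDerivAt_arsinh _).comp E h2
  have h4 : HasDerivAt (fun E' : ℝ => 4*E') 4 E := by
    simpa using (hasDerivAt_id E).const_mul 4
  have h5 := h4.mul h3
  have h6 : HasDerivAt (fun E' : ℝ => ℓ^2 - 8*E') (0 - 8) E := by
    have hlin : HasDerivAt (fun E' : ℝ => 8*E') 8 E := by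
      simpa using (hasDerivAt_id E).const_mul 8
    exact (hasDerivAt_const E (ℓ^2)).sub hlin
  have h7 := (h6.sqrt (ne_of_gt hs)).const_mul (ℓ/2)
  have h := h5.sub h7
  convert h using 1
  · rfl
  · rfl
  · rfl
  have hueq : ℓ^2/(8*E) - 1 = (ℓ^2 - 8*E)/(8*E) := by field_simp
  have hsq : Real.sqrt (ℓ^2/(8*E) - 1) ^ 2 = ℓ^2/(8*E) - 1 :=
    Real.sq_sqrt hu.le
  have h1p : 1 + (Real.sqrt (ℓ^2/(8*E) - 1)) ^ 2 = ℓ^2/(8*E) := by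
    rw [hsq]; ring
  have hsd : Real.sqrt (ℓ^2/(8*E)) = ℓ / Real.sqrt (8*E) := by
    rw [Real.sqrt_div (by positivity), Real.sqrt_sq hℓ.le]
  have hsd2 : Real.sqrt ((ℓ^2 - 8*E)/(8*E)) = Real.sqrt (ℓ^2 - 8*E) / Real.sqrt (8*E) := by
    rw [Real.sqrt_div hs.le]
  have hA : (0:ℝ) < Real.sqrt (8*E) := Real.sqrt_pos.mpr h8E
  have hB : (0:ℝ) < Real.sqrt (ℓ^2 - 8*E) := Real.sqrt_pos.mpr hs
  have hA2 : Real.sqrt (8*E) ^ 2 = 8*E := Real.sq_sqrt h8E.le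
  have hB2 : Real.sqrt (ℓ^2 - 8*E) ^ 2 = ℓ^2 - 8*E := Real.sq_sqrt hs.le
  have key : ∀ A B : ℝ, 0 < A → 0 < B → A^2 = 8*E → B^2 = ℓ^2 - 8*E →
      4*E*((ℓ/A)⁻¹ * ((0*(8*E) - ℓ^2*8)/(8*E)^2 / (2*(B/A)))) - ℓ/2*((0-8)/(2*B)) = 0 := by
    intro A B hA hB hA2 hB2
    field_simp
    linear_combination (-8*ℓ^2) * hA2
  have key' := key _ _ hA hB hA2 hB2
  simp only [Function.comp] at *
  rw [h1p, hueq, hsd, hsd2]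
  linarith [key']
end
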